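/- Let ρ be a stable relation on a finite set X such that every clasp in X is unlocked, and let R be an associative ring with unity. Then there exist a preorder ≤ on a finite set Y, a compression map θ : Y → X, and an injective ring homomorphism h : I(X,ρ,R) → I(Y,≤,R) (additive, multiplicative for the convolution products, and sending the identity to the identity). -/

import Mathlib

open scoped Classical

universe u v

/-- The interval `[x,y] = {z | x ρ z and z ρ y}` determined by a relation `ρ`. -/
def RelInterval {X : Type*} (ρ : X → X → Prop) (x y : X) : Set X :=
  {z | ρ x z ∧ ρ z y}

/-- A relation is locally finite if every interval is finite. -/
def RelLocallyFinite {X : Type*} (ρ : X → X → Prop) : Prop :=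
  ∀ x y, (RelInterval ρ x y).Finite

/-- A relation is balanced if it is reflexive and whenever
`w ρ x`, `x ρ y`, `y ρ z`, `w ρ z` all hold, `w ρ y ↔ x ρ z`. -/
def RelBalanced {X : Type*} (ρ : X → X → Prop) : Prop :=
  (∀ x, ρ x x) ∧
  ∀ w x y z, ρ w x → ρ x y → ρ y z → ρ w z → (ρ w y ↔ ρ x z)

/-- The underlying set of the generalized incidence ring `I(X,ρ,R)`:
functions `f : X → X → R` with `f x y ≠ 0 → x ρ y`. -/
def IncFun {X : Type*} (ρ : X → X → Prop) (R : Type*) [Ring R] :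
    Set (X → X → R) :=
  {f | ∀ x y, f x y ≠ 0 → ρ x y}

/-- The convolution product on `I(X,ρ,R)`. -/
noncomputable def conv {X R : Type*} [Ring R] (ρ : X → X → Prop)
    (f g : X → X → R) : X → X → R :=
  fun x y => if ρ x y then ∑ᶠ z ∈ RelInterval ρ x y, f x z * g z y else 0

/-- The function `e` with `e x x = 1` and `e x y = 0` for `x ≠ y`. -/
noncomputable def eId (X R : Type*) [Ring R] : X → X → R :=
  fun x y => if x = y then 1 else 0

/-- The matrix unit `e_{xy}`: value `1` at `(x,y)` and `0` elsewhere. -/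
noncomputable def eUnit {X : Type*} (R : Type*) [Ring R] (x y : X) : X → X → R :=
  fun i j => if i = x ∧ j = y then 1 else 0

/-- A homomorphism `Φ : ρ → G`: `Φ x y * Φ y z = Φ x z` on transitive triples. -/
def IsRelHom {X G : Type*} [Mul G] (ρ : X → X → Prop) (Φ : X → X → G) : Prop :=
  ∀ x y z, ρ x y → ρ y z → ρ x z → Φ x y * Φ y z = Φ x z

/-- The homogeneous component `S_a` induced by `Φ`. -/
def gradeSet {X G : Type*} (R : Type*) [Ring R] (ρ : X → X → Prop)
    (Φ : X → X → G) (a : G) : Set (X → X → R) :=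
  {f | (∀ x y, f x y ≠ 0 → ρ x y) ∧ ∀ x y, f x y ≠ 0 → Φ x y = a}

/-- The image `{Φ x y : x ρ y}` of a homomorphism `Φ : ρ → G`. -/
def RelImage {X G : Type*} (ρ : X → X → Prop) (Φ : X → X → G) : Set G :=
  {a | ∃ x y, ρ x y ∧ Φ x y = a}

/-- `θ : X₂ → X₁` is a compression map from `(X₂,ρ₂)` onto `(X₁,ρ₁)`. -/
structure IsCompression {X₁ X₂ : Type*} (ρ₁ : X₁ → X₁ → Prop)
    (ρ₂ : X₂ → X₂ → Prop) (θ : X₂ → X₁) : Prop where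
  surj : Function.Surjective θ
  mono : ∀ x y, ρ₂ x y → ρ₁ (θ x) (θ y)
  lift : ∀ a₁ a₂ a₃, ρ₁ a₁ a₂ → ρ₁ a₂ a₃ → ρ₁ a₁ a₃ →
    ∃ x₁ x₂ x₃, ρ₂ x₁ x₂ ∧ ρ₂ x₂ x₃ ∧ ρ₂ x₁ x₃ ∧
      θ x₁ = a₁ ∧ θ x₂ = a₂ ∧ θ x₃ = a₃
  bij : Set.BijOn (fun p : X₂ × X₂ => (θ p.1, θ p.2))
    {p | ρ₂ p.1 p.2 ∧ p.1 ≠ p.2} {q | ρ₁ q.1 q.2 ∧ q.1 ≠ q.2}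

/-- `σ ⊆ ρ` is a `G`-grading set for `ρ`: every function `φ : σ → G`
extends to a homomorphism `Φ : ρ → G` which is unique on `ρ`. -/
def IsGradingSet (G : Type*) [Mul G] {X : Type*} (ρ : X → X → Prop)
    (σ : Set (X × X)) : Prop :=
  (∀ p ∈ σ, ρ p.1 p.2) ∧
  ∀ φ : X × X → G, ∃ Φ : X → X → G,
    IsRelHom ρ Φ ∧ (∀ p ∈ σ, Φ p.1 p.2 = φ p) ∧
    ∀ Ψ : X → X → G, IsRelHom ρ Ψ → (∀ p ∈ σ, Ψ p.1 p.2 = φ p) →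
      ∀ x y, ρ x y → Ψ x y = Φ x y

/-- The map `h : I(X₁,ρ₁,R) → I(X₂,ρ₂,R)` induced by a compression `θ : X₂ → X₁`. -/
noncomputable def compressMap {X₁ X₂ : Type*} (R : Type*) [Ring R]
    (ρ₂ : X₂ → X₂ → Prop) (θ : X₂ → X₁) (f : X₁ → X₁ → R) : X₂ → X₂ → R :=
  fun x y => if ρ₂ x y then f (θ x) (θ y) else 0

/-- A transitive triple: `a ρ b`, `b ρ c`, `a ρ c`. -/
def TransTriple {X : Type*} (ρ : X → X → Prop) (a b c : X) : Prop :=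
  ρ a b ∧ ρ b c ∧ ρ a c

/-- A stable relation: balanced, and for all pairwise distinct `a,b,c,d`,
`a ρ b`, `a ρ c`, `b ρ c`, `b ρ d`, `c ρ d` imply `a ρ d`. -/
def RelStable {X : Type*} (ρ : X → X → Prop) : Prop :=
  RelBalanced ρ ∧
  ∀ a b c d : X, a ≠ b → a ≠ c → a ≠ d → b ≠ c → b ≠ d → c ≠ d →
    ρ a b → ρ a c → ρ b c → ρ b d → ρ c d → ρ a d

/-- `x` is a clasp. -/
def IsClasp {X : Type*} (ρ : X → X → Prop) (x : X) : Prop :=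
  ∃ w y, w ≠ x ∧ y ≠ x ∧ ρ w x ∧ ρ x y ∧ ¬ ρ w y

/-- `x` is a locked clasp. -/
def IsLockedClasp {X : Type*} (ρ : X → X → Prop) (x : X) : Prop :=
  ∃ u v w y : X, u ≠ x ∧ v ≠ x ∧ w ≠ x ∧ y ≠ x ∧ ¬ ρ w y ∧
    TransTriple ρ u x y ∧ TransTriple ρ u x v ∧ TransTriple ρ w x v

/-- `A` is a cross-cut for the (pre)order `ρ` on `X`. -/
def IsCrossCut {X : Type*} (ρ : X → X → Prop) (A : Set X) : Prop :=
  (∀ a ∈ A, ∀ b ∈ A, a ≠ b → ¬ ρ a b ∧ ¬ ρ b a) ∧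
  (∀ x : X, ∃ a ∈ A, ρ x a ∨ ρ a x) ∧
  (∀ C : Set X, IsChain ρ C → ∃ C', C ⊆ C' ∧ IsChain ρ C' ∧ (A ∩ C').Nonempty)


namespace SEmb

variable {X : Type u} (ρ : X → X → Prop)

def Edg : Type u := {p : X × X // ρ p.1 p.2 ∧ p.1 ≠ p.2}

def Isol : Type u := {x : X // ¬ ∃ z, z ≠ x ∧ (ρ z x ∨ ρ x z)}

inductive Pt : Type u
  | tl : Edg ρ → Pt
  | hd : Edg ρ → Pt
  | bs : Isol ρ → Pt

instance [Finite X] : Finite (Edg ρ) := by unfold Edg; infer_instance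
instance [Finite X] : Finite (Isol ρ) := by unfold Isol; infer_instance

def ptEmb : Pt ρ → (Edg ρ ⊕ Edg ρ ⊕ Isol ρ)
  | .tl e => .inl e
  | .hd e => .inr (.inl e)
  | .bs a => .inr (.inr a)

lemma ptEmb_inj : Function.Injective (ptEmb ρ) := by
  intro p q h
  cases p <;> cases q <;> simp [ptEmb] at h <;> subst h <;> rfl

instance [Finite X] : Finite (Pt ρ) := Finite.of_injective _ (ptEmb_inj ρ)

/-- projection to `X` -/
def proj : Pt ρ → X
  | .tl e => e.1.1
  | .hd e => e.1.2
  | .bs a => a.1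

/-- the gluing relation -/
def Phi : Pt ρ → Pt ρ → Prop
  | .tl e, .tl f => e.1.1 = f.1.1 ∧ ∀ w, w ≠ e.1.1 → ρ w e.1.1 → (ρ w e.1.2 ↔ ρ w f.1.2)
  | .tl e, .hd f => e.1.1 = f.1.2 ∧ ρ f.1.1 e.1.2
  | .hd e, .tl f => e.1.2 = f.1.1 ∧ ρ e.1.1 f.1.2
  | .hd e, .hd f => e.1.2 = f.1.2 ∧ ∀ y, y ≠ e.1.2 → ρ e.1.2 y → (ρ e.1.1 y ↔ ρ f.1.1 y)
  | .bs a, .bs b => a.1 = b.1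
  | _, _ => False

variable {ρ}
variable (hb : RelBalanced ρ)
variable (hS : ∀ a b c d : X, a ≠ b → a ≠ c → a ≠ d → b ≠ c → b ≠ d → c ≠ d →
    ρ a b → ρ a c → ρ b c → ρ b d → ρ c d → ρ a d)
variable (hC : ∀ x : X, IsClasp ρ x → ¬ IsLockedClasp ρ x)

include hC in
lemma unlocked {x u v w y : X} (hu : u ≠ x) (hv : v ≠ x) (hw : w ≠ x) (hy : y ≠ x)
    (hux : ρ u x) (hxy : ρ x y) (huy : ρ u y) (hxv : ρ x v) (huv : ρ u v)
    (hwx : ρ w x) (hwv : ρ w v) : ρ w y := by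
  by_contra hne
  exact hC x ⟨w, y, hw, hy, hwx, hxy, hne⟩
    ⟨u, v, w, y, hu, hv, hw, hy, hne, ⟨hux, hxy, huy⟩, ⟨hux, hxv, huv⟩, ⟨hwx, hxv, hwv⟩⟩

include hb hS in
/-- out-step forward : `w ρ y`, `y ρ y'` gives `w ρ y'`. -/
lemma L1 {x w y y' : X} (hw : w ≠ x) (hwx : ρ w x) (hy : y ≠ x) (hxy : ρ x y)
    (hy' : y' ≠ x) (hxy' : ρ x y') (h1 : ρ w y) (h2 : ρ y y') : ρ w y' := by
  by_cases hwy' : w = y'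
  · subst hwy'; exact hb.1 _
  by_cases hyy' : y = y'
  · subst hyy'; exact h1
  by_cases hwy : w = y
  · subst hwy; exact h2
  exact hS w x y y' hw hwy hwy' (Ne.symm hy) (Ne.symm hy') hyy' hwx h1 hxy hxy' h2

include hb in
/-- out-step backward : `w ρ y`, `y' ρ y` gives `w ρ y'`. -/
lemma L2 {x w y y' : X} (hwx : ρ w x) (hxy : ρ x y) (hxy' : ρ x y')
    (h1 : ρ w y) (h2 : ρ y' y) : ρ w y' :=
  ((hb.2 w x y' y hwx hxy' h2 h1).2 hxy)

include hC in
/-- out-step via a common in-neighbour `u`. -/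
lemma L3 {x w u y y' : X} (hw : w ≠ x) (hwx : ρ w x) (hu : u ≠ x) (hux : ρ u x)
    (hy : y ≠ x) (hxy : ρ x y) (hy' : y' ≠ x) (hxy' : ρ x y')
    (h1 : ρ w y) (h2 : ρ u y) (h3 : ρ u y') : ρ w y' :=
  unlocked hC hu hy hw hy' hux hxy' h3 hxy h2 hwx h1

include hb hS in
/-- in-step : `ρ w w'`, `w' ρ y` give `w ρ y`. -/
lemma L4 {x w w' y : X} (hw : w ≠ x) (hwx : ρ w x) (hw' : w' ≠ x) (hw'x : ρ w' x)
    (hy : y ≠ x) (hxy : ρ x y) (h1 : ρ w w') (h2 : ρ w' y) : ρ w y := by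
  by_cases hww' : w = w'
  · subst hww'; exact h2
  by_cases hwy : w = y
  · subst hwy; exact hb.1 _
  by_cases hw'y : w' = y
  · subst hw'y; exact h1
  exact hS w w' x y hww' hw hwy hw' hw'y (Ne.symm hy) h1 hwx hw'x h2 hxy

include hb in
/-- in-step backward : `ρ w' w`, `w' ρ y` give `w ρ y`. -/
lemma L5 {x w w' y : X} (hwx : ρ w x) (hw'x : ρ w' x) (hxy : ρ x y)
    (h1 : ρ w' w) (h2 : ρ w' y) : ρ w y :=
  (hb.2 w' w x y h1 hwx hxy h2).1 hw'x

include hC in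
/-- in-step via common out-neighbour `y''`. -/
lemma L6 {x w w' y y'' : X} (hw : w ≠ x) (hwx : ρ w x) (hw' : w' ≠ x) (hw'x : ρ w' x)
    (hy : y ≠ x) (hxy : ρ x y) (hy'' : y'' ≠ x) (hxy'' : ρ x y'')
    (h1 : ρ w y'') (h2 : ρ w' y'') (h3 : ρ w' y) : ρ w y :=
  unlocked hC hw' hy'' hw hy hw'x hxy h3 hxy'' h2 hwx h1

include hb in
/-- two-cycle: `a ρ z`, `z ρ a`, `w ρ a` give `w ρ z`. -/
lemma L7 {a z w : X} (h1 : ρ a z) (h2 : ρ z a) (h3 : ρ w a) : ρ w z :=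
  (hb.2 w a z a h3 h1 h2 h3).2 (hb.1 a)

include hb in
/-- two-cycle: `a ρ z`, `z ρ a`, `a ρ y` give `z ρ y`. -/
lemma L8 {a z y : X} (h1 : ρ a z) (h2 : ρ z a) (h3 : ρ a y) : ρ z y :=
  (hb.2 a z a y h1 h2 h3 h3).1 (hb.1 a)

lemma phi_refl (p : Pt ρ) : Phi ρ p p := by
  cases p <;> simp [Phi]

lemma phi_symm : ∀ {p q : Pt ρ}, Phi ρ p q → Phi ρ q p := by
  rintro (e|e|a) (f|f|b) h <;> simp only [Phi] at h ⊢
  · exact ⟨h.1.symm, fun w hw hwa => (h.2 w (h.1 ▸ hw) (h.1 ▸ hwa)).symm⟩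
  · exact ⟨h.1.symm, h.2⟩
  · exact ⟨h.1.symm, h.2⟩
  · exact ⟨h.1.symm, fun y hy hby => (h.2 y (h.1 ▸ hy) (h.1 ▸ hby)).symm⟩
  · exact h.symm

include hb hS hC in
lemma phi_trans : ∀ {p q r : Pt ρ}, Phi ρ p q → Phi ρ q r → Phi ρ p r := by
  rintro (⟨⟨a,b⟩,hab,nab⟩|⟨⟨a,b⟩,hab,nab⟩|⟨a,ha⟩)
         (⟨⟨c,d⟩,hcd,ncd⟩|⟨⟨c,d⟩,hcd,ncd⟩|⟨c,hc⟩)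
         (⟨⟨e,f⟩,hef,nef⟩|⟨⟨e,f⟩,hef,nef⟩|⟨e,he⟩) h1 h2 <;>
    simp only [Phi] at h1 h2 ⊢
  -- (tl,tl,tl)
  · obtain ⟨rfl, H1⟩ := h1; obtain ⟨rfl, H2⟩ := h2
    exact ⟨rfl, fun w hw hwa => (H1 w hw hwa).trans (H2 w hw hwa)⟩
  -- (tl,tl,hd)
  · obtain ⟨rfl, H1⟩ := h1; obtain ⟨rfl, H2⟩ := h2
    exact ⟨rfl, (H1 e nef hef).2 H2⟩
  -- (tl,hd,tl)
  · obtain ⟨rfl, H1⟩ := h1; obtain ⟨rfl, H2⟩ := h2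
    refine ⟨rfl, fun w hw hwa => ⟨fun hwb => ?_, fun hwf => ?_⟩⟩
    · exact L3 hC hw hwa ncd hcd (Ne.symm nab) hab (Ne.symm nef) hef hwb H1 H2
    · exact L3 hC hw hwa ncd hcd (Ne.symm nef) hef (Ne.symm nab) hab hwf H2 H1
  -- (tl,hd,hd)
  · obtain ⟨rfl, H1⟩ := h1; obtain ⟨rfl, H2⟩ := h2
    exact ⟨rfl, (H2 b (Ne.symm nab) hab).1 H1⟩
  -- (hd,tl,tl)
  · obtain ⟨rfl, H1⟩ := h1; obtain ⟨rfl, H2⟩ := h2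
    exact ⟨rfl, (H2 a nab hab).1 H1⟩
  -- (hd,tl,hd)
  · obtain ⟨rfl, H1⟩ := h1; obtain ⟨rfl, H2⟩ := h2
    refine ⟨rfl, fun y hy hby => ⟨fun hay => ?_, fun hey => ?_⟩⟩
    · exact L6 hC nef hef nab hab hy hby (Ne.symm ncd) hcd H2 H1 hay
    · exact L6 hC nab hab nef hef hy hby (Ne.symm ncd) hcd H1 H2 hey
  -- (hd,hd,tl)
  · obtain ⟨rfl, H1⟩ := h1; obtain ⟨rfl, H2⟩ := h2
    exact ⟨rfl, (H1 f (Ne.symm nef) hef).2 H2⟩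
  -- (hd,hd,hd)
  · obtain ⟨rfl, H1⟩ := h1; obtain ⟨rfl, H2⟩ := h2
    exact ⟨rfl, fun y hy hby => (H1 y hy hby).trans (H2 y hy hby)⟩
  -- (bs,bs,bs)
  · exact h1.trans h2

/-- the setoid of endpoints -/
def ptSetoid : Setoid (Pt ρ) :=
  ⟨Phi ρ, ⟨phi_refl, fun h => phi_symm h, fun h h' => phi_trans hb hS hC h h'⟩⟩

/-- the quotient `Y` -/
def Yq : Type u := Quotient (ptSetoid hb hS hC)

def mkq (p : Pt ρ) : Yq hb hS hC := Quotient.mk (ptSetoid hb hS hC) p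

lemma mkq_eq {p q : Pt ρ} : mkq hb hS hC p = mkq hb hS hC q ↔ Phi ρ p q :=
  ⟨fun h => Quotient.exact h, fun h => Quot.sound h⟩

lemma mkq_surj : Function.Surjective (mkq hb hS hC) := Quotient.exists_rep

lemma proj_phi {p q : Pt ρ} (h : Phi ρ p q) : proj ρ p = proj ρ q := by
  cases p <;> cases q <;> simp only [Phi, proj] at h ⊢ <;>
    first | exact h.1 | exact h | cases h

/-- the compression map -/
def thq : Yq hb hS hC → X := Quotient.lift (proj ρ) (fun _ _ h => proj_phi h)

@[simp] lemma thq_mk (p : Pt ρ) : thq hb hS hC (mkq hb hS hC p) = proj ρ p := rfl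

/-- the preorder on `Y` -/
def leq : Yq hb hS hC → Yq hb hS hC → Prop := fun u v =>
  u = v ∨ ∃ e : Edg ρ, u = mkq hb hS hC (.tl e) ∧ v = mkq hb hS hC (.hd e)

lemma leq_refl (u : Yq hb hS hC) : leq hb hS hC u u := Or.inl rfl

def mkE (a b : X) (h : ρ a b) (n : a ≠ b) : Edg ρ := ⟨(a,b), h, n⟩

include hb hS in
lemma glue_tt {x y y' : X} (hy : y ≠ x) (hxy : ρ x y) (hy' : y' ≠ x) (hxy' : ρ x y')
    (h : ρ y y' ∨ ρ y' y) :
    Phi ρ (.tl (mkE x y hxy (Ne.symm hy))) (.tl (mkE x y' hxy' (Ne.symm hy'))) := by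
  simp only [Phi, mkE]
  refine ⟨trivial, fun w hw hwx => ⟨fun h1 => ?_, fun h1 => ?_⟩⟩
  · rcases h with h2 | h2
    · exact L1 hb hS hw hwx hy hxy hy' hxy' h1 h2
    · exact L2 hb hwx hxy hxy' h1 h2
  · rcases h with h2 | h2
    · exact L2 hb hwx hxy' hxy h1 h2
    · exact L1 hb hS hw hwx hy' hxy' hy hxy h1 h2

include hb hS in
lemma glue_hh {x w w' : X} (hw : w ≠ x) (hwx : ρ w x) (hw' : w' ≠ x) (hw'x : ρ w' x)
    (h : ρ w w' ∨ ρ w' w) :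
    Phi ρ (.hd (mkE w x hwx hw)) (.hd (mkE w' x hw'x hw')) := by
  simp only [Phi, mkE]
  refine ⟨trivial, fun y hy hxy => ⟨fun h1 => ?_, fun h1 => ?_⟩⟩
  · rcases h with h2 | h2
    · exact L5 hb hw'x hwx hxy h2 h1
    · exact L4 hb hS hw' hw'x hw hwx hy hxy h2 h1
  · rcases h with h2 | h2
    · exact L4 hb hS hw hwx hw' hw'x hy hxy h2 h1
    · exact L5 hb hwx hw'x hxy h2 h1

lemma glue_ht {w x y : X} (hw : w ≠ x) (hwx : ρ w x) (hy : y ≠ x) (hxy : ρ x y)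
    (h : ρ w y) :
    Phi ρ (.hd (mkE w x hwx hw)) (.tl (mkE x y hxy (Ne.symm hy))) := by
  simp only [Phi, mkE]
  exact ⟨trivial, h⟩

include hb hC in
/-- if `a` lies on a two-cycle then all endpoints over `a` are glued -/
lemma glue_all {a z : X} (hz : z ≠ a) (h1 : ρ a z) (h2 : ρ z a) :
    ∀ p : Pt ρ, proj ρ p = a → Phi ρ p (.tl (mkE a z h1 (Ne.symm hz))) := by
  rintro (⟨⟨a',b'⟩,h',n'⟩|⟨⟨a',b'⟩,h',n'⟩|⟨i,hi⟩) hp <;> simp only [proj] at hp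
  · subst hp
    simp only [Phi, mkE]
    refine ⟨trivial, fun w hw hwa => ⟨fun _ => L7 hb h1 h2 hwa, fun _ => ?_⟩⟩
    exact L6 hC hw hwa hz h2 (Ne.symm n') h' hz h1 (by assumption) (hb.1 z) (L8 hb h1 h2 h')
  · subst hp
    simp only [Phi, mkE]
    exact ⟨trivial, L7 hb h1 h2 h'⟩
  · exfalso
    apply hi
    refine ⟨z, ?_, ?_⟩
    · rw [hp]; exact hz
    · rw [hp]; exact Or.inr h1

include hb hS hC in
lemma leq_trans (u v w : Yq hb hS hC) (h1 : leq hb hS hC u v) (h2 : leq hb hS hC v w) :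
    leq hb hS hC u w := by
  rcases h1 with rfl | ⟨e, rfl, rfl⟩
  · exact h2
  rcases h2 with rfl | ⟨f, hvf, rfl⟩
  · exact Or.inr ⟨e, rfl, rfl⟩
  obtain ⟨⟨a,b⟩,hab,nab⟩ := e
  obtain ⟨⟨c,d⟩,hcd,ncd⟩ := f
  have hPhi := (mkq_eq hb hS hC).1 hvf
  simp only [Phi] at hPhi
  obtain ⟨hbc, had⟩ := hPhi
  subst hbc
  by_cases had' : a = d
  · subst had'
    left
    refine (mkq_eq hb hS hC).2 ?_
    simp only [Phi]
    exact ⟨trivial, hb.1 b⟩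
  · refine Or.inr ⟨mkE a d had had', ?_, ?_⟩
    · refine (mkq_eq hb hS hC).2 ?_
      exact glue_tt hb hS (Ne.symm nab) hab (Ne.symm had') had (Or.inl hcd)
    · refine (mkq_eq hb hS hC).2 ?_
      exact glue_hh hb hS ncd hcd had' had (Or.inr hab)

lemma tl_ne_hd (e : Edg ρ) :
    mkq hb hS hC (.tl e) ≠ mkq hb hS hC (.hd e) := by
  intro h
  have := (mkq_eq hb hS hC).1 h
  simp only [Phi] at this
  exact e.2.2 this.1

lemma thq_surj : Function.Surjective (thq hb hS hC) := by
  intro a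
  by_cases hiso : ∃ z, z ≠ a ∧ (ρ z a ∨ ρ a z)
  · obtain ⟨z, hz, hza | haz⟩ := hiso
    · exact ⟨mkq hb hS hC (.hd (mkE z a hza hz)), rfl⟩
    · exact ⟨mkq hb hS hC (.tl (mkE a z haz (Ne.symm hz))), rfl⟩
  · exact ⟨mkq hb hS hC (.bs ⟨a, hiso⟩), rfl⟩

lemma leq_mono (u v : Yq hb hS hC) (h : leq hb hS hC u v) :
    ρ (thq hb hS hC u) (thq hb hS hC v) := by
  rcases h with rfl | ⟨e, rfl, rfl⟩
  · exact hb.1 _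
  · exact e.2.1

lemma leq_edge (e : Edg ρ) :
    leq hb hS hC (mkq hb hS hC (.tl e)) (mkq hb hS hC (.hd e)) := Or.inr ⟨e, rfl, rfl⟩

lemma leq_eq_of_thq {u v : Yq hb hS hC} (h : leq hb hS hC u v)
    (he : thq hb hS hC u = thq hb hS hC v) : u = v := by
  rcases h with rfl | ⟨e, rfl, rfl⟩
  · rfl
  · exact absurd he e.2.2

lemma leq_strict {u v : Yq hb hS hC} (h : leq hb hS hC u v)
    (hne : thq hb hS hC u ≠ thq hb hS hC v) :
    ∃ e : Edg ρ, u = mkq hb hS hC (.tl e) ∧ v = mkq hb hS hC (.hd e) := by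
  rcases h with rfl | ⟨e, rfl, rfl⟩
  · exact absurd rfl hne
  · exact ⟨e, rfl, rfl⟩

include hb hS hC in
lemma leq_lift (a b c : X) (hab : ρ a b) (hbc : ρ b c) (hac : ρ a c) :
    ∃ u v w : Yq hb hS hC, leq hb hS hC u v ∧ leq hb hS hC v w ∧ leq hb hS hC u w ∧
      thq hb hS hC u = a ∧ thq hb hS hC v = b ∧ thq hb hS hC w = c := by
  by_cases h1 : a = b
  · subst h1
    by_cases h2 : a = c
    · subst h2
      obtain ⟨u, hu⟩ := thq_surj hb hS hC a
      exact ⟨u, u, u, leq_refl _ _ _ _, leq_refl _ _ _ _, leq_refl _ _ _ _, hu, hu, hu⟩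
    · exact ⟨mkq hb hS hC (.tl (mkE a c hac h2)), mkq hb hS hC (.tl (mkE a c hac h2)),
        mkq hb hS hC (.hd (mkE a c hac h2)), leq_refl _ _ _ _, leq_edge _ _ _ _,
        leq_edge _ _ _ _, rfl, rfl, rfl⟩
  by_cases h2 : b = c
  · subst h2
    exact ⟨mkq hb hS hC (.tl (mkE a b hab h1)), mkq hb hS hC (.hd (mkE a b hab h1)),
      mkq hb hS hC (.hd (mkE a b hab h1)), leq_edge _ _ _ _, leq_refl _ _ _ _,
      leq_edge _ _ _ _, rfl, rfl, rfl⟩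
  by_cases h3 : a = c
  · subst h3
    -- a ρ b, b ρ a, a ≠ b
    refine ⟨mkq hb hS hC (.tl (mkE a b hab h1)), mkq hb hS hC (.hd (mkE a b hab h1)),
      mkq hb hS hC (.hd (mkE b a hbc (Ne.symm h1))), leq_edge _ _ _ _, ?_, ?_, rfl, rfl, rfl⟩
    · refine Or.inr ⟨mkE b a hbc (Ne.symm h1), ?_, rfl⟩
      exact (mkq_eq hb hS hC).2
        (glue_ht (w := a) (x := b) (y := a) h1 hab h1 hbc (hb.1 a))
    · left
      refine (mkq_eq hb hS hC).2 ?_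
      simp only [Phi, mkE]
      exact ⟨trivial, hb.1 b⟩
  · -- a,b,c pairwise distinct
    refine ⟨mkq hb hS hC (.tl (mkE a b hab h1)), mkq hb hS hC (.hd (mkE a b hab h1)),
      mkq hb hS hC (.hd (mkE b c hbc h2)), leq_edge _ _ _ _, ?_, ?_, rfl, rfl, rfl⟩
    · refine Or.inr ⟨mkE b c hbc h2, ?_, rfl⟩
      exact (mkq_eq hb hS hC).2
        (glue_ht (w := a) (x := b) (y := c) h1 hab (Ne.symm h2) hbc hac)
    · refine Or.inr ⟨mkE a c hac h3, ?_, ?_⟩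
      · exact (mkq_eq hb hS hC).2
          (glue_tt hb hS (Ne.symm h1) hab (Ne.symm h3) hac (Or.inl hbc))
      · exact (mkq_eq hb hS hC).2
          (glue_hh hb hS h2 hbc h3 hac (Or.inr hab))

include hb hS hC in
lemma interval_inj {u v : Yq hb hS hC} :
    Set.InjOn (thq hb hS hC) (RelInterval (leq hb hS hC) u v) := by
  rintro t ⟨hut, htv⟩ t' ⟨hut', ht'v⟩ heq
  by_cases hta : thq hb hS hC t = thq hb hS hC u
  · have e1 : u = t := leq_eq_of_thq hb hS hC hut hta.symm
    have e2 : u = t' := leq_eq_of_thq hb hS hC hut' (hta.symm.trans heq)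
    rw [← e1, ← e2]
  by_cases htb : thq hb hS hC t = thq hb hS hC v
  · have e1 : t = v := leq_eq_of_thq hb hS hC htv htb
    have e2 : t' = v := leq_eq_of_thq hb hS hC ht'v (heq.symm.trans htb)
    rw [e1, e2]
  · obtain ⟨e, hue, hte⟩ := leq_strict hb hS hC hut (fun h => hta h.symm)
    obtain ⟨e', hue', hte'⟩ := leq_strict hb hS hC hut' (fun h => hta (heq.trans h.symm))
    have h11 : e.1.1 = e'.1.1 := congrArg (thq hb hS hC) (hue.symm.trans hue')
    have h22 : e.1.2 = e'.1.2 := by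
      have := heq
      rw [hte, hte'] at this
      exact this
    have : e = e' := Subtype.ext (Prod.ext h11 h22)
    rw [hte, hte', this]

include hb hS hC in
lemma interval_image {u v : Yq hb hS hC} (huv : leq hb hS hC u v) :
    RelInterval ρ (thq hb hS hC u) (thq hb hS hC v) =
      (thq hb hS hC) '' (RelInterval (leq hb hS hC) u v) := by
  ext z
  constructor
  · rintro ⟨haz, hzb⟩
    by_cases hza : z = thq hb hS hC u
    · exact ⟨u, ⟨leq_refl _ _ _ _, huv⟩, hza.symm⟩
    by_cases hzb' : z = thq hb hS hC v
    · exact ⟨v, ⟨huv, leq_refl _ _ _ _⟩, hzb'.symm⟩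
    by_cases hab : thq hb hS hC u = thq hb hS hC v
    · -- two-cycle case
      have huv' : u = v := leq_eq_of_thq hb hS hC huv hab
      subst huv'
      obtain ⟨p, rfl⟩ := mkq_surj hb hS hC u
      rw [← hab] at hzb
      rw [thq_mk] at haz hzb hza
      -- endpoints over `proj ρ p` are all glued
      have hall := glue_all hb hC (a := proj ρ p) (z := z) hza haz hzb
      refine ⟨mkq hb hS hC (.hd (mkE (proj ρ p) z haz (Ne.symm hza))), ⟨?_, ?_⟩, rfl⟩
      · exact Or.inr ⟨mkE (proj ρ p) z haz (Ne.symm hza),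
          (mkq_eq hb hS hC).2 (hall p rfl), rfl⟩
      · refine Or.inr ⟨mkE z (proj ρ p) hzb hza, ?_, ?_⟩
        · exact (mkq_eq hb hS hC).2
            (glue_ht (w := proj ρ p) (x := z) (y := proj ρ p)
              (Ne.symm hza) haz (Ne.symm hza) hzb (hb.1 (proj ρ p)))
        · exact ((mkq_eq hb hS hC).2 (hall p rfl)).trans
            ((mkq_eq hb hS hC).2 (hall (.hd (mkE z (proj ρ p) hzb hza)) rfl)).symm
    · obtain ⟨e, rfl, rfl⟩ := leq_strict hb hS hC huv hab
      obtain ⟨⟨a, b⟩, hab', nab⟩ := e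
      simp only [thq_mk, proj] at haz hzb hza hzb'
      refine ⟨mkq hb hS hC (.hd (mkE a z haz (Ne.symm hza))), ⟨?_, ?_⟩, rfl⟩
      · refine Or.inr ⟨mkE a z haz (Ne.symm hza), ?_, rfl⟩
        exact (mkq_eq hb hS hC).2
          (glue_tt hb hS (Ne.symm nab) hab' hza haz (Or.inr hzb))
      · refine Or.inr ⟨mkE z b hzb hzb', ?_, ?_⟩
        · exact (mkq_eq hb hS hC).2
            (glue_ht (w := a) (x := z) (y := b) (Ne.symm hza) haz
              (fun h => hzb' h.symm) hzb hab')
        · exact ((mkq_eq hb hS hC).2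
            (glue_hh hb hS hzb' hzb nab hab' (Or.inr haz))).symm
  · rintro ⟨t, ⟨h1, h2⟩, rfl⟩
    exact ⟨leq_mono hb hS hC _ _ h1, leq_mono hb hS hC _ _ h2⟩

section Algebra

variable {X' : Type u} {Y' : Type v} (R : Type*) [Ring R]
variable (ρ' : X' → X' → Prop) (le' : Y' → Y' → Prop) (θ' : Y' → X')

lemma comp_incfun (f : X' → X' → R) : compressMap R le' θ' f ∈ IncFun le' R := by
  intro u v h
  by_contra hle
  simp only [compressMap, if_neg hle] at h
  exact h rfl

lemma comp_add (f g : X' → X' → R) :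
    compressMap R le' θ' (f + g) = compressMap R le' θ' f + compressMap R le' θ' g := by
  funext u v
  by_cases h : le' u v <;> simp [compressMap, h]

lemma comp_conv
    (hmono : ∀ u v, le' u v → ρ' (θ' u) (θ' v))
    (himg : ∀ u v, le' u v →
      RelInterval ρ' (θ' u) (θ' v) = θ' '' RelInterval le' u v)
    (hinj : ∀ u v, Set.InjOn θ' (RelInterval le' u v))
    (f g : X' → X' → R) :
    compressMap R le' θ' (conv ρ' f g) =
      conv le' (compressMap R le' θ' f) (compressMap R le' θ' g) := by
  funext u v
  by_cases huv : le' u v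
  · have h1 : ρ' (θ' u) (θ' v) := hmono u v huv
    simp only [compressMap, conv, if_pos huv, if_pos h1]
    rw [himg u v huv, finsum_mem_image (hinj u v)]
    refine finsum_mem_congr rfl (fun t ht => ?_)
    rw [if_pos ht.1, if_pos ht.2]
  · simp only [compressMap, conv, if_neg huv]

lemma comp_eid
    (hrefl : ∀ u, le' u u)
    (hne : ∀ u v, le' u v → θ' u = θ' v → u = v) :
    compressMap R le' θ' (eId X' R) = eId Y' R := by
  funext u v
  by_cases heq : u = v
  · subst heq
    simp [compressMap, eId, hrefl u]
  · by_cases huv : le' u v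
    · have : θ' u ≠ θ' v := fun h => heq (hne u v huv h)
      simp [compressMap, eId, huv, this, heq]
    · simp [compressMap, eId, huv, heq]

lemma comp_injOn
    (hlift3 : ∀ a b, ρ' a b → ∃ u v, le' u v ∧ θ' u = a ∧ θ' v = b) :
    Set.InjOn (compressMap R le' θ') (IncFun ρ' R) := by
  intro f hf g hg hfg
  funext a b
  by_cases hab : ρ' a b
  · obtain ⟨u, v, huv, rfl, rfl⟩ := hlift3 a b hab
    have := congrFun (congrFun hfg u) v
    simpa [compressMap, if_pos huv] using this
  · have h1 : f a b = 0 := by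
      by_contra h; exact hab (hf a b h)
    have h2 : g a b = 0 := by
      by_contra h; exact hab (hg a b h)
    rw [h1, h2]

end Algebra

end SEmb

/-- a stable relation on a finite set all of whose clasps are
unlocked is the compression of a preorder on a finite set `Y`, and there is an
injective ring homomorphism `I(X,ρ,R) → I(Y,≤,R)`. -/
theorem stable_embeds_in_preorder_incidence {X : Type*} (R : Type*) [Ring R]
    [Finite X] (ρ : X → X → Prop)
    (hstable : RelStable ρ)
    (hclasp : ∀ x : X, IsClasp ρ x → ¬ IsLockedClasp ρ x) :
    ∃ (Y : Type) (le : Y → Y → Prop) (θ : Y → X)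
      (h : (X → X → R) → (Y → Y → R)),
      Finite Y ∧
      (∀ y, le y y) ∧ (∀ a b c, le a b → le b c → le a c) ∧
      IsCompression ρ le θ ∧
      (∀ f ∈ IncFun ρ R, h f ∈ IncFun le R) ∧
      (∀ f ∈ IncFun ρ R, ∀ g ∈ IncFun ρ R, h (f + g) = h f + h g) ∧
      (∀ f ∈ IncFun ρ R, ∀ g ∈ IncFun ρ R, h (conv ρ f g) = conv le (h f) (h g)) ∧
      h (eId X R) = eId Y R ∧
      Set.InjOn h (IncFun ρ R) := by
  classical
  obtain ⟨hb, hS⟩ := hstable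
  have hfin : Finite (SEmb.Yq hb hS hclasp) :=
    Finite.of_surjective _ (SEmb.mkq_surj hb hS hclasp)
  obtain ⟨n, ⟨eqv⟩⟩ := Finite.exists_equiv_fin (SEmb.Yq hb hS hclasp)
  set le0 : Fin n → Fin n → Prop :=
    fun i j => SEmb.leq hb hS hclasp (eqv.symm i) (eqv.symm j) with hle0
  set th0 : Fin n → X :=
    fun i => SEmb.thq hb hS hclasp (eqv.symm i) with hth0
  have hrefl0 : ∀ i, le0 i i := fun i => SEmb.leq_refl hb hS hclasp _
  have htrans0 : ∀ i j k, le0 i j → le0 j k → le0 i k :=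
    fun i j k h1 h2 => SEmb.leq_trans hb hS hclasp _ _ _ h1 h2
  have hmono0 : ∀ i j, le0 i j → ρ (th0 i) (th0 j) :=
    fun i j h => SEmb.leq_mono hb hS hclasp _ _ h
  have hne0 : ∀ i j, le0 i j → th0 i = th0 j → i = j :=
    fun i j h he => eqv.symm.injective (SEmb.leq_eq_of_thq hb hS hclasp h he)
  have hsurj0 : Function.Surjective th0 := by
    intro a
    obtain ⟨u, hu⟩ := SEmb.thq_surj hb hS hclasp a
    refine ⟨eqv u, ?_⟩
    show SEmb.thq hb hS hclasp (eqv.symm (eqv u)) = a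
    rw [Equiv.symm_apply_apply]; exact hu
  have hsetint : ∀ i j, RelInterval (SEmb.leq hb hS hclasp) (eqv.symm i) (eqv.symm j) =
      eqv.symm '' RelInterval le0 i j := by
    intro i j
    ext t
    constructor
    · intro ht
      refine ⟨eqv t, ⟨?_, ?_⟩, eqv.symm_apply_apply t⟩
      · show SEmb.leq hb hS hclasp (eqv.symm i) (eqv.symm (eqv t))
        rw [Equiv.symm_apply_apply]; exact ht.1
      · show SEmb.leq hb hS hclasp (eqv.symm (eqv t)) (eqv.symm j)
        rw [Equiv.symm_apply_apply]; exact ht.2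
    · rintro ⟨s, hs, rfl⟩
      exact ⟨hs.1, hs.2⟩
  have himg0 : ∀ i j, le0 i j →
      RelInterval ρ (th0 i) (th0 j) = th0 '' RelInterval le0 i j := by
    intro i j h
    have h1 := SEmb.interval_image hb hS hclasp (u := eqv.symm i) (v := eqv.symm j) h
    rw [hsetint i j, Set.image_image] at h1
    exact h1
  have hinj0 : ∀ i j, Set.InjOn th0 (RelInterval le0 i j) := by
    intro i j t ht t' ht' he
    have h := SEmb.interval_inj hb hS hclasp (u := eqv.symm i) (v := eqv.symm j)
      (Iff.rfl.2 ⟨ht.1, ht.2⟩) (Iff.rfl.2 ⟨ht'.1, ht'.2⟩) he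
    exact eqv.symm.injective h
  have hlift30 : ∀ a b, ρ a b → ∃ u v, le0 u v ∧ th0 u = a ∧ th0 v = b := by
    intro a b hab
    by_cases h : a = b
    · subst h
      obtain ⟨i, hi⟩ := hsurj0 a
      exact ⟨i, i, hrefl0 i, hi, hi⟩
    · refine ⟨eqv (SEmb.mkq hb hS hclasp (.tl (SEmb.mkE a b hab h))),
        eqv (SEmb.mkq hb hS hclasp (.hd (SEmb.mkE a b hab h))), ?_, ?_, ?_⟩
      · show SEmb.leq hb hS hclasp (eqv.symm (eqv _)) (eqv.symm (eqv _))
        rw [Equiv.symm_apply_apply, Equiv.symm_apply_apply]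
        exact SEmb.leq_edge hb hS hclasp _
      · show SEmb.thq hb hS hclasp (eqv.symm (eqv _)) = a
        rw [Equiv.symm_apply_apply]; rfl
      · show SEmb.thq hb hS hclasp (eqv.symm (eqv _)) = b
        rw [Equiv.symm_apply_apply]; rfl
  refine ⟨Fin n, le0, th0, compressMap R le0 th0, inferInstance, hrefl0, htrans0,
    ⟨hsurj0, hmono0, ?_, ?_, ?_, ?_⟩,
    fun f _ => SEmb.comp_incfun R le0 th0 f,
    fun f _ g _ => SEmb.comp_add R le0 th0 f g,
    fun f _ g _ => SEmb.comp_conv R ρ le0 th0 hmono0 himg0 hinj0 f g,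
    SEmb.comp_eid R le0 th0 hrefl0 hne0,
    SEmb.comp_injOn R ρ le0 th0 hlift30⟩
  -- lift
  · intro a b c h1 h2 h3
    obtain ⟨u, v, w, l1, l2, l3, t1, t2, t3⟩ := SEmb.leq_lift hb hS hclasp a b c h1 h2 h3
    refine ⟨eqv u, eqv v, eqv w, ?_, ?_, ?_, ?_, ?_, ?_⟩
    · show SEmb.leq hb hS hclasp (eqv.symm (eqv u)) (eqv.symm (eqv v))
      rw [Equiv.symm_apply_apply, Equiv.symm_apply_apply]; exact l1
    · show SEmb.leq hb hS hclasp (eqv.symm (eqv v)) (eqv.symm (eqv w))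
      rw [Equiv.symm_apply_apply, Equiv.symm_apply_apply]; exact l2
    · show SEmb.leq hb hS hclasp (eqv.symm (eqv u)) (eqv.symm (eqv w))
      rw [Equiv.symm_apply_apply, Equiv.symm_apply_apply]; exact l3
    · show SEmb.thq hb hS hclasp (eqv.symm (eqv u)) = a
      rw [Equiv.symm_apply_apply]; exact t1
    · show SEmb.thq hb hS hclasp (eqv.symm (eqv v)) = b
      rw [Equiv.symm_apply_apply]; exact t2
    · show SEmb.thq hb hS hclasp (eqv.symm (eqv w)) = c
      rw [Equiv.symm_apply_apply]; exact t3
  -- bij : MapsTo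
  · rintro ⟨i, j⟩ ⟨hle, hne⟩
    exact ⟨hmono0 i j hle, fun h => hne (hne0 i j hle h)⟩
  -- bij : InjOn
  · rintro ⟨i, j⟩ ⟨hle, hne⟩ ⟨i', j'⟩ ⟨hle', hne'⟩ hpq
    have hne1 : SEmb.thq hb hS hclasp (eqv.symm i) ≠ SEmb.thq hb hS hclasp (eqv.symm j) :=
      fun h => hne (hne0 i j hle h)
    have hne1' : SEmb.thq hb hS hclasp (eqv.symm i') ≠ SEmb.thq hb hS hclasp (eqv.symm j') :=
      fun h => hne' (hne0 i' j' hle' h)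
    obtain ⟨e, he1, he2⟩ := SEmb.leq_strict hb hS hclasp hle hne1
    obtain ⟨e', he1', he2'⟩ := SEmb.leq_strict hb hS hclasp hle' hne1'
    have hfst : th0 i = th0 i' := congrArg Prod.fst hpq
    have hsnd : th0 j = th0 j' := congrArg Prod.snd hpq
    have hv1 : e.1.1 = e'.1.1 := by
      have a1 : th0 i = e.1.1 := by
        show SEmb.thq hb hS hclasp (eqv.symm i) = e.1.1
        rw [he1]; rfl
      have a2 : th0 i' = e'.1.1 := by
        show SEmb.thq hb hS hclasp (eqv.symm i') = e'.1.1
        rw [he1']; rfl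
      rw [← a1, ← a2, hfst]
    have hv2 : e.1.2 = e'.1.2 := by
      have a1 : th0 j = e.1.2 := by
        show SEmb.thq hb hS hclasp (eqv.symm j) = e.1.2
        rw [he2]; rfl
      have a2 : th0 j' = e'.1.2 := by
        show SEmb.thq hb hS hclasp (eqv.symm j') = e'.1.2
        rw [he2']; rfl
      rw [← a1, ← a2, hsnd]
    have hee : e = e' := Subtype.ext (Prod.ext hv1 hv2)
    subst hee
    have : eqv.symm i = eqv.symm i' := he1.trans he1'.symm
    have hii : i = i' := eqv.symm.injective this
    have : eqv.symm j = eqv.symm j' := he2.trans he2'.symm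
    have hjj : j = j' := eqv.symm.injective this
    simp [hii, hjj]
  -- bij : SurjOn
  · rintro ⟨a, b⟩ ⟨hab, hne⟩
    refine ⟨(eqv (SEmb.mkq hb hS hclasp (.tl (SEmb.mkE a b hab hne))),
      eqv (SEmb.mkq hb hS hclasp (.hd (SEmb.mkE a b hab hne)))), ⟨?_, ?_⟩, ?_⟩
    · show SEmb.leq hb hS hclasp (eqv.symm (eqv _)) (eqv.symm (eqv _))
      rw [Equiv.symm_apply_apply, Equiv.symm_apply_apply]
      exact SEmb.leq_edge hb hS hclasp _
    · intro h
      have := eqv.injective h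
      exact SEmb.tl_ne_hd hb hS hclasp _ this
    · show (th0 _, th0 _) = (a, b)
      have c1 : th0 (eqv (SEmb.mkq hb hS hclasp (.tl (SEmb.mkE a b hab hne)))) = a := by
        show SEmb.thq hb hS hclasp (eqv.symm (eqv _)) = a
        rw [Equiv.symm_apply_apply]; rfl
      have c2 : th0 (eqv (SEmb.mkq hb hS hclasp (.hd (SEmb.mkE a b hab hne)))) = b := by
        show SEmb.thq hb hS hclasp (eqv.symm (eqv _)) = b
        rw [Equiv.symm_apply_apply]; rfl
      rw [c1, c2]
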